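/- Let n ≥ 1, let C be the n×n real matrix with entries C_{ij} = 1/((i + j − 1)(i + j)), let A₀ be the n×n matrix with ones on the subdiagonal, b₀ = e₁, H = diag(−(2i−1)/2)_{i=1}^n, and Dₙ = diag((−1)^{i−1}/(i−1)!)_{i=1}^n. Then the matrix identity ((1/2)I − H + Dₙ^{−1}A₀Dₙ)·C + C·((1/2)I − H + Dₙ^{−1}A₀Dₙ)ᵀ = b₀b₀ᵀ holds. -/

import Mathlib

open Matrix Finset

private lemma shift_sum {n : ℕ} (i : Fin n) (f : Fin n → ℝ) :
    (∑ k : Fin n, if i.val = k.val + 1 then f k else 0) =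
      if h : i.val = 0 then 0
      else f ⟨i.val - 1, lt_of_le_of_lt (Nat.pred_le _) i.isLt⟩ := by
  split_ifs with h
  · exact Finset.sum_eq_zero fun k _ => if_neg (by omega)
  · rw [Finset.sum_eq_single (⟨i.val - 1, lt_of_le_of_lt (Nat.pred_le _) i.isLt⟩ : Fin n)]
    · rw [if_pos (show i.val = i.val - 1 + 1 by omega)]
    · intro k _ hk
      exact if_neg fun hc => hk (by simp only [Fin.ext_iff]; omega)
    · simp

theorem stmt9 (n : ℕ) (hn : 1 ≤ n)
    (C : Matrix (Fin n) (Fin n) ℝ)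
    (hC : C = Matrix.of fun i j : Fin n =>
      (1 : ℝ) / (((i.val + j.val + 1 : ℕ) : ℝ) * ((i.val + j.val + 2 : ℕ) : ℝ)))
    (A₀ : Matrix (Fin n) (Fin n) ℝ)
    (hA₀ : A₀ = Matrix.of fun i j : Fin n => if i.val = j.val + 1 then (1 : ℝ) else 0)
    (b₀ : Fin n → ℝ)
    (hb₀ : b₀ = fun i : Fin n => if i.val = 0 then (1 : ℝ) else 0)
    (H : Matrix (Fin n) (Fin n) ℝ)
    (hH : H = Matrix.diagonal fun i : Fin n => -((2 * (i.val : ℝ) + 1) / 2))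
    (Dn : Matrix (Fin n) (Fin n) ℝ)
    (hDn : Dn = Matrix.diagonal fun i : Fin n =>
      (-1 : ℝ) ^ i.val / (Nat.factorial i.val : ℝ)) :
    ((1 / 2 : ℝ) • 1 - H + Dn⁻¹ * A₀ * Dn) * C +
      C * ((1 / 2 : ℝ) • 1 - H + Dn⁻¹ * A₀ * Dn)ᵀ = Matrix.vecMulVec b₀ b₀ := by
  subst hC hA₀ hb₀ hH hDn
  have hfac : ∀ m : ℕ, ((Nat.factorial m : ℝ)) ≠ 0 := fun m => by
    exact_mod_cast (Nat.factorial_pos m).ne'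
  have hpow : ∀ m : ℕ, ((-1 : ℝ)) ^ m * (-1 : ℝ) ^ m = 1 := fun m => by
    rw [← pow_add]; exact Even.neg_one_pow (Even.add_self _)
  have hDinv : (Matrix.diagonal fun i : Fin n =>
      (-1 : ℝ) ^ i.val / (Nat.factorial i.val : ℝ))⁻¹ =
      Matrix.diagonal fun i : Fin n => (-1 : ℝ) ^ i.val * (Nat.factorial i.val : ℝ) := by
    apply Matrix.inv_eq_right_inv
    rw [Matrix.diagonal_mul_diagonal]
    ext i j
    rcases eq_or_ne i j with rfl | hne
    · rw [Matrix.diagonal_apply_eq, Matrix.one_apply_eq]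
      have := hfac i.val
      field_simp
      linear_combination hpow i.val
    · rw [Matrix.diagonal_apply_ne _ hne, Matrix.one_apply_ne hne]
  set M : Matrix (Fin n) (Fin n) ℝ := Matrix.of fun i j : Fin n =>
    (if i = j then ((i.val : ℝ) + 1) else 0) +
      (if i.val = j.val + 1 then -(i.val : ℝ) else 0) with hMdef
  have hM : (1 / 2 : ℝ) • 1 - (Matrix.diagonal fun i : Fin n => -((2 * (i.val : ℝ) + 1) / 2)) +
      (Matrix.diagonal fun i : Fin n => (-1 : ℝ) ^ i.val / (Nat.factorial i.val : ℝ))⁻¹ *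
        (Matrix.of fun i j : Fin n => if i.val = j.val + 1 then (1 : ℝ) else 0) *
        (Matrix.diagonal fun i : Fin n => (-1 : ℝ) ^ i.val / (Nat.factorial i.val : ℝ)) = M := by
    rw [hDinv]
    ext i j
    simp only [hMdef, Matrix.add_apply, Matrix.sub_apply, Matrix.smul_apply,
      Matrix.one_apply, Matrix.diagonal_apply, Matrix.diagonal_mul, Matrix.mul_diagonal,
      Matrix.of_apply, smul_eq_mul]
    by_cases hij : i = j
    · subst hij
      simp only [if_pos rfl, if_neg (show ¬ i.val = i.val + 1 by omega), if_true, ite_true]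
      ring
    · simp only [if_neg hij]
      by_cases hsh : i.val = j.val + 1
      · simp only [if_pos hsh]
        rw [hsh, pow_succ, Nat.factorial_succ]
        have := hfac j.val
        push_cast
        field_simp
        linear_combination (-(2 * (j.val : ℝ) + 2)) * hpow j.val
      · simp only [if_neg hsh]
        ring
  rw [hM]
  ext i j
  simp only [Matrix.add_apply, Matrix.mul_apply, Matrix.transpose_apply, hMdef,
    Matrix.of_apply, Matrix.vecMulVec_apply]
  simp only [add_mul, mul_add, ite_mul, mul_ite, zero_mul, mul_zero, Finset.sum_add_distrib]
  rw [Finset.sum_ite_eq, shift_sum, Finset.sum_ite_eq, shift_sum]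
  simp only [Finset.mem_univ, if_pos]
  have hij1 : (i.val : ℝ) + j.val + 1 ≠ 0 := by positivity
  have hij2 : (i.val : ℝ) + j.val + 2 ≠ 0 := by positivity
  by_cases hi : i.val = 0 <;> by_cases hj : j.val = 0
  · simp only [dif_pos hi, dif_pos hj, if_pos hi, if_pos hj, hi, hj]
    norm_num
  · simp only [dif_pos hi, dif_neg hj, if_pos hi, if_neg hj, hi]
    have e1 : (0 : ℕ) + (j.val - 1) + 1 = j.val := by omega
    have e2 : (0 : ℕ) + (j.val - 1) + 2 = j.val + 1 := by omega
    simp only [e1, e2]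
    have hj0 : (j.val : ℝ) ≠ 0 := by exact_mod_cast hj
    push_cast
    field_simp
    ring
  · simp only [dif_neg hi, dif_pos hj, if_neg hi, if_pos hj, hj]
    have e1 : i.val - 1 + 0 + 1 = i.val := by omega
    have e2 : i.val - 1 + 0 + 2 = i.val + 1 := by omega
    simp only [e1, e2]
    have hi0 : (i.val : ℝ) ≠ 0 := by exact_mod_cast hi
    push_cast
    field_simp
    ring
  · simp only [dif_neg hi, dif_neg hj, if_neg hi, if_neg hj]
    have e1 : i.val - 1 + j.val + 1 = i.val + j.val := by omega
    have e2 : i.val - 1 + j.val + 2 = i.val + j.val + 1 := by omega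
    have e3 : i.val + (j.val - 1) + 1 = i.val + j.val := by omega
    have e4 : i.val + (j.val - 1) + 2 = i.val + j.val + 1 := by omega
    simp only [e1, e2, e3, e4]
    have hij0 : (i.val : ℝ) + j.val ≠ 0 := by
      have h : (0 : ℕ) < i.val + j.val := by omega
      have : (0 : ℝ) < (i.val : ℝ) + j.val := by exact_mod_cast h
      linarith
    push_cast
    field_simp
    ring
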